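/- arXiv:1012.0110 — 4 statements merged into one kernel-verified Lean document; each statement's English description precedes it below -/
import Mathlib

section
/- Let M be a commutative monoid with a zero element. Then the underlying additive group of the ring (MonoidAlgebra ℤ M) ⧸ Ideal.span {Finsupp.single (0 : M) (1 : ℤ)} is isomorphic, as an additive group, to the quotient (FreeAbelianGroup M) ⧸ AddSubgroup.zmultiples (FreeAbelianGroup.of (0 : M)). (This expresses that the underlying abelian group of the monoid ring β(M) = ℤ[M]/(0) is the free abelian group α(M) on the pointed set M with the basepoint 0 identified to zero.) -/
/-- The underlying additive group of the monoid ring `β(M) = ℤ[M]/(0)` is the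
free abelian group `α(M)` on the pointed set `M` with the basepoint `0`
identified with zero. -/
theorem monoidAlgebra_quotient_addEquiv_freeAbelianGroup_quotient
    (M : Type*) [CommMonoidWithZero M] :
    Nonempty ((MonoidAlgebra ℤ M ⧸
        Ideal.span {MonoidAlgebra.single (0 : M) (1 : ℤ)}) ≃+
      (FreeAbelianGroup M ⧸ AddSubgroup.zmultiples (FreeAbelianGroup.of (0 : M)))) := by
  set s : MonoidAlgebra ℤ M := MonoidAlgebra.single (0 : M) (1 : ℤ) with hs
  set e : MonoidAlgebra ℤ M ≃+ FreeAbelianGroup M :=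
    (MonoidAlgebra.coeffAddEquiv.trans (FreeAbelianGroup.equivFinsupp M).symm : MonoidAlgebra ℤ M ≃+ FreeAbelianGroup M) with he
  have hes : e s = FreeAbelianGroup.of (0 : M) := by
    have h1 : FreeAbelianGroup.equivFinsupp M (FreeAbelianGroup.of (0 : M)) = MonoidAlgebra.coeffAddEquiv s := by
      simp [hs, FreeAbelianGroup.equivFinsupp, MonoidAlgebra.coeff_single]
    rw [he]
    show (FreeAbelianGroup.equivFinsupp M).symm (MonoidAlgebra.coeffAddEquiv s) = _
    exact (AddEquiv.symm_apply_eq _).mpr h1.symm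
  have hmul : ∀ r : MonoidAlgebra ℤ M, ∃ n : ℤ, n • s = r * s := by
    intro r
    induction r using MonoidAlgebra.induction_on with
    | of g =>
      refine ⟨1, ?_⟩
      have : MonoidAlgebra.of ℤ M g = MonoidAlgebra.single g (1 : ℤ) := rfl
      rw [this, hs, MonoidAlgebra.single_mul_single]
      simp
    | add f g hf hg =>
      obtain ⟨n, hn⟩ := hf; obtain ⟨m, hm⟩ := hg
      exact ⟨n + m, by rw [add_mul, ← hn, ← hm, add_smul]⟩
    | smul r f hf =>
      obtain ⟨n, hn⟩ := hf
      exact ⟨r * n, by rw [smul_mul_assoc, ← hn, smul_smul]⟩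
  refine ⟨QuotientAddGroup.congr (Ideal.span {s}).toAddSubgroup
    (AddSubgroup.zmultiples (FreeAbelianGroup.of (0 : M))) e ?_⟩
  ext x
  rw [AddSubgroup.mem_map]
  constructor
  · rintro ⟨y, hy, rfl⟩
    have : s ∣ y := by simpa [Ideal.mem_span_singleton] using hy
    obtain ⟨r, hr⟩ := this
    obtain ⟨n, hn⟩ := hmul r
    rw [mul_comm] at hr
    rw [← hn] at hr
    rw [← hes]
    refine ⟨n, ?_⟩
    show n • e s = e y
    rw [← map_zsmul, hr]
  · rintro ⟨n, hn⟩
    refine ⟨n • s, ?_, ?_⟩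
    · show n • s ∈ Ideal.span {s}
      rw [Ideal.mem_span_singleton]
      exact ⟨n • 1, by rw [mul_comm, smul_mul_assoc, one_mul]⟩
    · show e (n • s) = x
      rw [map_zsmul, hes]; exact hn
end

section
/- Let p be a prime number and let A be an additive commutative group such that for every natural number n coprime to p, the map a ↦ n • a is a bijection of A. Then the additive group (ℚ →+ A) of additive homomorphisms from ℚ to A is isomorphic, as an additive group, to the inverse limit of the tower ⋯ → A → A → A with all maps given by multiplication by p, i.e. to the group {s : ℕ → A // ∀ n, p • s (n+1) = s n} with pointwise addition; the isomorphism sends f to the sequence n ↦ f (1/pⁿ). -/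
/-- The inverse limit of the tower `⋯ → A → A → A` of multiplication-by-`p` maps,
realized as the additive group of sequences `s : ℕ → A` with `p • s (n+1) = s n`. -/
def pTower (p : ℕ) (A : Type*) [AddCommGroup A] : AddSubgroup (ℕ → A) where
  carrier := {s : ℕ → A | ∀ n, p • s (n + 1) = s n}
  zero_mem' := by intro n; simp
  add_mem' := by
    intro a b ha hb n
    simp only [Pi.add_apply, smul_add, ha n, hb n]
  neg_mem' := by
    intro a ha n
    simp only [Pi.neg_apply, smul_neg, ha n]

section Aux

variable {A : Type*} [AddCommGroup A] {p : ℕ}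

/-- Division by `m` on `A` (inverse of `m • ·`), defined via `invFun`. -/
noncomputable def pDiv (m : ℕ) (x : A) : A := Function.invFun (fun a : A => m • a) x

variable (hA : ∀ n : ℕ, Nat.Coprime n p → Function.Bijective (fun a : A => n • a))

include hA

lemma smul_pDiv {m : ℕ} (hm : m.Coprime p) (x : A) : m • pDiv m x = x :=
  Function.rightInverse_invFun (hA m hm).2 x

lemma pDiv_zsmul {m : ℕ} (hm : m.Coprime p) (a : ℤ) (x : A) :
    pDiv m (a • x) = a • pDiv m x := by
  apply (hA m hm).1
  show m • pDiv m (a • x) = m • (a • pDiv m x)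
  rw [smul_pDiv hA hm, smul_comm, smul_pDiv hA hm]

lemma pDiv_mul {k l : ℕ} (hk : k.Coprime p) (hl : l.Coprime p) (x : A) :
    pDiv k x = l • pDiv (k * l) x := by
  apply (hA k hk).1
  show k • pDiv k x = k • (l • pDiv (k * l) x)
  rw [smul_pDiv hA hk, ← mul_smul, smul_pDiv hA (hk.mul hl)]

lemma pDiv_one (x : A) : pDiv 1 x = x := by
  have := smul_pDiv hA (Nat.coprime_one_left p) x
  rwa [one_smul] at this

omit hA in
lemma s_shift (s : ℕ → A) (hs : ∀ n, p • s (n + 1) = s n) (n k : ℕ) :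
    s n = p ^ k • s (n + k) := by
  induction k with
  | zero => simp
  | succ k ih =>
    rw [ih, ← hs (n + k), ← mul_smul, ← pow_succ]
    rfl

lemma G_step (s : ℕ → A) (hs : ∀ n, p • s (n + 1) = s n)
    (b : ℤ) (i j k l : ℕ) (hk : k.Coprime p) (hl : l.Coprime p) :
    b • pDiv k (s i) = (b * p ^ j * l) • pDiv (k * l) (s (i + j)) := by
  rw [s_shift s hs i j]
  have h1 : (p ^ j : ℕ) • s (i + j) = ((p : ℤ) ^ j) • s (i + j) := by
    rw [← natCast_zsmul]; push_cast; ring_nf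
  rw [h1, pDiv_zsmul hA hk, pDiv_mul hA hk hl (s (i + j)),
    ← natCast_zsmul (pDiv (k * l) (s (i + j))) l, smul_smul, smul_smul]

lemma G_eq (s : ℕ → A) (hs : ∀ n, p • s (n + 1) = s n)
    (a a' : ℤ) (n n' m m' : ℕ) (hm : m.Coprime p) (hm' : m'.Coprime p)
    (h : a * p ^ n' * m' = a' * p ^ n * m) :
    a • pDiv m (s n) = a' • pDiv m' (s n') := by
  rw [G_step hA s hs a n n' m m' hm hm', G_step hA s hs a' n' n m' m hm' hm,
    h, mul_comm m' m, add_comm n n']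

variable (p) in
/-- The candidate inverse map: given a compatible sequence `s`, send `q : ℚ` to
`q.num • (s v)/m` where `q.den = p^v * m` with `m` coprime to `p`. -/
noncomputable def Fmap (s : ℕ → A) (q : ℚ) : A :=
  q.num • pDiv (q.den / p ^ (q.den.factorization p)) (s (q.den.factorization p))

lemma Fmap_eq (hp : p.Prime) (s : ℕ → A) (hs : ∀ n, p • s (n + 1) = s n)
    (q : ℚ) (a : ℤ) (n m : ℕ) (hm : m.Coprime p)
    (h : q.num * (p : ℤ) ^ n * m = a * q.den) :
    Fmap p s q = a • pDiv m (s n) := by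
  have hd : q.den ≠ 0 := q.den_nz
  have hm0 : (q.den / p ^ (q.den.factorization p)).Coprime p :=
    (Nat.coprime_ordCompl hp hd).symm
  apply G_eq hA s hs _ _ _ _ _ _ hm0 hm
  have hden : (p : ℤ) ^ (q.den.factorization p) * ((q.den / p ^ (q.den.factorization p) : ℕ) : ℤ) = q.den := by
    exact_mod_cast congrArg (Nat.cast : ℕ → ℤ) (Nat.ordProj_mul_ordCompl_eq_self q.den p)
  conv_rhs => rw [mul_assoc, hden]
  exact h

lemma Fmap_add (hp : p.Prime) (s : ℕ → A) (hs : ∀ n, p • s (n + 1) = s n)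
    (q r : ℚ) : Fmap p s (q + r) = Fmap p s q + Fmap p s r := by
  set d : ℕ := q.den * r.den with hd_def
  have hd : d ≠ 0 := Nat.mul_ne_zero q.den_nz r.den_nz
  set N : ℕ := d.factorization p with hN
  set M : ℕ := d / p ^ N with hM
  have hM0 : M.Coprime p := (Nat.coprime_ordCompl hp hd).symm
  have hdNM : (p : ℤ) ^ N * M = d := by
    exact_mod_cast congrArg (Nat.cast : ℕ → ℤ) (Nat.ordProj_mul_ordCompl_eq_self d p)
  -- helper: numerator-denominator relation in ℚ
  have num_eq : ∀ x : ℚ, (x.num : ℚ) = x * x.den := fun x =>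
    (div_eq_iff (by exact_mod_cast x.den_nz : (x.den : ℚ) ≠ 0)).mp (Rat.num_div_den x)
  have h1 : Fmap p s q = (q.num * r.den) • pDiv M (s N) := by
    refine Fmap_eq hA hp s hs _ _ _ _ hM0 ?_
    rw [mul_assoc q.num, hdNM]
    push_cast [hd_def]
    ring
  have h2 : Fmap p s r = (r.num * q.den) • pDiv M (s N) := by
    refine Fmap_eq hA hp s hs _ _ _ _ hM0 ?_
    rw [mul_assoc r.num, hdNM]
    push_cast [hd_def]
    ring
  have h3 : Fmap p s (q + r) = (q.num * r.den + r.num * q.den) • pDiv M (s N) := by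
    refine Fmap_eq hA hp s hs _ _ _ _ hM0 ?_
    have key : ((q + r).num : ℚ) * ((p : ℚ) ^ N * M) =
        ((q.num * r.den + r.num * q.den : ℤ) : ℚ) * ((q + r).den : ℚ) := by
      have e1 : ((p : ℚ) ^ N * M) = (d : ℚ) := by exact_mod_cast hdNM
      rw [e1, num_eq (q + r)]
      push_cast [hd_def, num_eq q, num_eq r]
      ring
    have : (q + r).num * ((p : ℤ) ^ N * M) =
        (q.num * r.den + r.num * q.den) * (q + r).den := by exact_mod_cast key
    rw [mul_assoc]
    exact this
  rw [h1, h2, h3, add_smul]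

end Aux

/-- If `A` is uniquely `n`-divisible for every `n` coprime to `p`, then `Hom(ℚ, A)`
is the inverse limit `lim (⋯ → A →p→ A →p→ A)`, via `f ↦ (n ↦ f (1/pⁿ))`. -/
theorem homRat_addEquiv_pTower
    (p : ℕ) (hp : p.Prime) (A : Type*) [AddCommGroup A]
    (hA : ∀ n : ℕ, Nat.Coprime n p → Function.Bijective (fun a : A => n • a)) :
    ∃ e : (ℚ →+ A) ≃+ pTower p A,
      ∀ (f : ℚ →+ A) (n : ℕ), (e f : ℕ → A) n = f (1 / (p : ℚ) ^ n) := by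
  have hp0 : (p : ℚ) ≠ 0 := by exact_mod_cast hp.ne_zero
  -- the forward homomorphism
  have mem_tower : ∀ f : ℚ →+ A, (fun n => f (1 / (p : ℚ) ^ n)) ∈ pTower p A := by
    intro f n
    show p • f (1 / (p : ℚ) ^ (n + 1)) = f (1 / (p : ℚ) ^ n)
    rw [← map_nsmul]
    congr 1
    rw [nsmul_eq_mul]
    push_cast
    field_simp
    ring
  set Φ : (ℚ →+ A) →+ pTower p A :=
    { toFun := fun f => ⟨fun n => f (1 / (p : ℚ) ^ n), mem_tower f⟩
      map_zero' := by ext n; rfl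
      map_add' := by intro f g; ext n; rfl } with hΦ
  have hinj : Function.Injective Φ := by
    intro f g hfg
    have hfg' : ∀ n : ℕ, f (1 / (p : ℚ) ^ n) = g (1 / (p : ℚ) ^ n) := by
      intro n
      exact congrFun (congrArg Subtype.val hfg) n
    ext q
    have hd : q.den ≠ 0 := q.den_nz
    set v : ℕ := q.den.factorization p with hv
    set m : ℕ := q.den / p ^ v with hm
    have hm0 : m.Coprime p := (Nat.coprime_ordCompl hp hd).symm
    have hden : (p : ℚ) ^ v * m = q.den := by
      exact_mod_cast congrArg (Nat.cast : ℕ → ℚ) (Nat.ordProj_mul_ordCompl_eq_self q.den p)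
    have hm0' : (m : ℚ) ≠ 0 := by
      intro h0
      rw [h0, mul_zero] at hden
      exact (by exact_mod_cast hd : (q.den : ℚ) ≠ 0) hden.symm
    -- f (1/q.den) = g (1/q.den)
    have key : ∀ h : ℚ →+ A, m • h (1 / (q.den : ℚ)) = h (1 / (p : ℚ) ^ v) := by
      intro h
      rw [← map_nsmul]
      congr 1
      rw [nsmul_eq_mul, ← hden]
      field_simp
    have hstep : f (1 / (q.den : ℚ)) = g (1 / (q.den : ℚ)) := by
      apply (hA m hm0).1
      show m • f (1 / (q.den : ℚ)) = m • g (1 / (q.den : ℚ))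
      rw [key f, key g, hfg' v]
    have hq : (q.num : ℤ) • (1 / (q.den : ℚ)) = q := by
      rw [zsmul_eq_mul, mul_one_div, Rat.num_div_den]
    calc f q = f (q.num • (1 / (q.den : ℚ))) := by rw [hq]
      _ = q.num • f (1 / (q.den : ℚ)) := map_zsmul f _ _
      _ = q.num • g (1 / (q.den : ℚ)) := by rw [hstep]
      _ = g (q.num • (1 / (q.den : ℚ))) := (map_zsmul g _ _).symm
      _ = g q := by rw [hq]
  have hsurj : Function.Surjective Φ := by
    rintro ⟨s, hs⟩
    have hs' : ∀ n, p • s (n + 1) = s n := hs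
    refine ⟨AddMonoidHom.mk' (Fmap p s) (Fmap_add hA hp s hs'), ?_⟩
    ext n
    show Fmap p s (1 / (p : ℚ) ^ n) = s n
    rw [Fmap_eq hA hp s hs' (1 / (p : ℚ) ^ n) 1 n 1 (Nat.coprime_one_left p), one_smul,
      pDiv_one hA]
    -- side condition
    have key : (((1 / (p : ℚ) ^ n).num : ℚ)) * ((p : ℚ) ^ n) * 1 =
        1 * ((1 / (p : ℚ) ^ n).den : ℚ) := by
      have := Rat.num_div_den (1 / (p : ℚ) ^ n)
      field_simp
      field_simp at this
      linarith [this]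
    exact_mod_cast key
  refine ⟨AddEquiv.ofBijective Φ ⟨hinj, hsurj⟩, fun f n => rfl⟩
end

section
/- Let T be a family of additive commutative groups indexed by the prime numbers such that for every prime p, every element t of T p is annihilated by some power of p (i.e. ∃ k, p^k • t = 0; each T p is a p-primary torsion group). Let f : ℚ →+ (∀ p, T p) be an additive homomorphism to the direct product. Then f takes values in the direct sum — i.e. for every q : ℚ the set {p | f q p ≠ 0} is finite — if and only if the set {p | f 1 p ≠ 0} is finite. (Homomorphisms ℚ → ∏_p T_p landing in ⊕_p T_p are exactly those whose p-th component kills ℤ, i.e. factors through ℚ/ℤ, for all but finitely many p.) -/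
/-- Let `T p` be a `p`-primary torsion abelian group for each prime `p`, and let
`f : ℚ →+ ∏_p T p`. Then `f` takes values in the direct sum `⊕_p T p` (i.e. `f q`
is finitely supported for every `q`) if and only if `f 1` is finitely supported,
i.e. the `p`-th component of `f` factors through `ℚ/ℤ` for all but finitely
many `p`. -/
theorem homRat_lands_in_directSum_iff
    (T : Nat.Primes → Type*) [∀ p, AddCommGroup (T p)]
    (hT : ∀ (p : Nat.Primes) (t : T p), ∃ k : ℕ, (p : ℕ) ^ k • t = 0)
    (f : ℚ →+ ∀ p, T p) :
    (∀ q : ℚ, {p : Nat.Primes | f q p ≠ 0}.Finite) ↔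
      {p : Nat.Primes | f 1 p ≠ 0}.Finite := by
  constructor
  · intro h; exact h 1
  · intro h1 q
    set d : ℕ := q.den with hd
    have hfin : ({p : Nat.Primes | f 1 p ≠ 0} ∪
        ((fun p : Nat.Primes => (p : ℕ)) ⁻¹' ↑d.primeFactors)).Finite := by
      refine h1.union (Set.Finite.preimage ?_ d.primeFactors.finite_toSet)
      intro a _ b _ hab
      exact Subtype.ext hab
    refine hfin.subset ?_
    intro p hp
    by_contra hcon
    simp only [Set.mem_union, Set.mem_setOf_eq, Set.mem_preimage,
      Finset.mem_coe, Nat.mem_primeFactors, not_or, not_and, not_not] at hcon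
    obtain ⟨h1p, hdvd⟩ := hcon
    have hpd : ¬ (p : ℕ) ∣ d := by
      intro hdd
      exact q.den_nz (hdvd p.2 hdd)
    -- d • f q p = q.num • f 1 p = 0
    have key : (d : ℤ) • f q p = (0 : T p) := by
      have hden : (d : ℚ) ≠ 0 := by exact_mod_cast q.den_nz
      have h2 : ((d : ℤ) • q) = ((q.num : ℤ) • (1 : ℚ)) := by
        rw [zsmul_eq_mul, zsmul_eq_mul, mul_one]
        push_cast
        rw [mul_comm, ← eq_div_iff hden]
        exact (Rat.num_div_den q).symm
      have h3 : (d : ℤ) • f q = (q.num : ℤ) • f 1 := by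
        rw [← map_zsmul, ← map_zsmul, h2]
      have := congrFun h3 p
      simp only [Pi.smul_apply] at this
      rw [this, h1p, smul_zero]
    obtain ⟨k, hk⟩ := hT p (f q p)
    have hcop : IsCoprime (d : ℤ) (((p : ℕ) : ℤ) ^ k) := by
      have hc : Nat.Coprime d ((p : ℕ) ^ k) :=
        Nat.Coprime.pow_right k ((Nat.Prime.coprime_iff_not_dvd p.2).mpr hpd).symm
      have := hc.isCoprime
      push_cast at this
      exact this
    obtain ⟨u, v, huv⟩ := hcop
    have : f q p = 0 := by
      calc f q p = (u * d + v * ((p : ℕ) : ℤ) ^ k) • f q p := by rw [huv, one_smul]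
        _ = u • ((d : ℤ) • f q p) + v • ((((p : ℕ) : ℤ)) ^ k • f q p) := by
            rw [add_smul, mul_smul, mul_smul]
        _ = 0 := by
            rw [key]
            have hpk : (((p : ℕ) : ℤ)) ^ k • f q p = 0 := by
              rw [← Nat.cast_pow, natCast_zsmul]
              exact hk
            rw [hpk, smul_zero, smul_zero, add_zero]
    exact hp this
end

section
/- Let p be a prime number. The additive group of additive homomorphisms from ℚ to the p-primary component of ℚ/ℤ (the Prüfer p-group ℤ(p^∞)) is isomorphic, as an additive group, to the additive group of the p-adic numbers ℚ_p. -/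
/-- The `p`-primary component of an abelian group: the subgroup of elements
annihilated by some power of `p`. -/
def primaryComponent (p : ℕ) (G : Type*) [AddCommGroup G] : AddSubgroup G where
  carrier := {x : G | ∃ k : ℕ, p ^ k • x = 0}
  zero_mem' := ⟨0, by simp⟩
  add_mem' := by
    rintro a b ⟨k, hk⟩ ⟨l, hl⟩
    refine ⟨k + l, ?_⟩
    have ha : p ^ (k + l) • a = 0 := by
      rw [pow_add, mul_comm, mul_smul, hk, smul_zero]
    have hb : p ^ (k + l) • b = 0 := by
      rw [pow_add, mul_smul, hl, smul_zero]
    rw [smul_add, ha, hb, add_zero]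
  neg_mem' := by
    rintro a ⟨k, hk⟩
    exact ⟨k, by rw [smul_neg, hk, neg_zero]⟩

open Cardinal

namespace HomRatPrueferAux
set_option linter.unusedSectionVars false

variable {p : ℕ} [hp : Fact p.Prime]

/-- Rationals with `p`-power denominator. -/
def IsPAdicFrac (p : ℕ) (q : ℚ) : Prop := ∃ (n : ℕ) (a : ℤ), (p : ℚ) ^ n * q = a

lemma isPAdicFrac_add {q r : ℚ} (hq : IsPAdicFrac p q) (hr : IsPAdicFrac p r) :
    IsPAdicFrac p (q + r) := by
  obtain ⟨n, a, ha⟩ := hq; obtain ⟨m, b, hb⟩ := hr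
  refine ⟨n + m, (p : ℤ) ^ m * a + (p : ℤ) ^ n * b, ?_⟩
  have h : (p : ℚ) ^ (n + m) * (q + r)
      = (p : ℚ) ^ m * ((p : ℚ) ^ n * q) + (p : ℚ) ^ n * ((p : ℚ) ^ m * r) := by ring
  rw [h, ha, hb]; push_cast; ring

lemma isPAdicFrac_neg {q : ℚ} (hq : IsPAdicFrac p q) : IsPAdicFrac p (-q) := by
  obtain ⟨n, a, ha⟩ := hq
  exact ⟨n, -a, by rw [mul_neg, ha]; push_cast; ring⟩

lemma isPAdicFrac_sub {q r : ℚ} (hq : IsPAdicFrac p q) (hr : IsPAdicFrac p r) :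
    IsPAdicFrac p (q - r) := by
  rw [sub_eq_add_neg]; exact isPAdicFrac_add hq (isPAdicFrac_neg hr)

lemma exists_frac (x : ℚ_[p]) :
    ∃ q : ℚ, IsPAdicFrac p q ∧ ‖x - (q : ℚ_[p])‖ ≤ 1 := by
  have hp1 : (1 : ℝ) < (p : ℝ) := by exact_mod_cast hp.out.one_lt
  have hppos : (0 : ℝ) < (p : ℝ) := by positivity
  obtain ⟨n, hn⟩ : ∃ n : ℕ, ‖x‖ ≤ (p : ℝ) ^ n := by
    obtain ⟨n, hn⟩ := pow_unbounded_of_one_lt (‖x‖) hp1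
    exact ⟨n, hn.le⟩
  have hu : ‖x * (p : ℚ_[p]) ^ n‖ ≤ 1 := by
    rw [norm_mul, Padic.norm_p_pow]
    calc ‖x‖ * (p : ℝ) ^ (-n : ℤ) ≤ (p : ℝ) ^ n * (p : ℝ) ^ (-n : ℤ) := by
          apply mul_le_mul_of_nonneg_right hn (by positivity)
      _ = 1 := by
          rw [← zpow_natCast (p : ℝ) n, ← zpow_add₀ (ne_of_gt hppos)]
          simp
  set U : ℤ_[p] := ⟨x * (p : ℚ_[p]) ^ n, hu⟩ with hU
  set a : ℕ := U.appr n with haa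
  have hnorm : ‖U - (a : ℤ_[p])‖ ≤ (p : ℝ) ^ (-n : ℤ) :=
    (PadicInt.norm_le_pow_iff_mem_span_pow _ n).2 (PadicInt.appr_spec n U)
  have hnorm' : ‖x * (p : ℚ_[p]) ^ n - (a : ℚ_[p])‖ ≤ (p : ℝ) ^ (-n : ℤ) := by
    have : ((U - (a : ℤ_[p]) : ℤ_[p]) : ℚ_[p]) = x * (p : ℚ_[p]) ^ n - (a : ℚ_[p]) := by
      rw [PadicInt.coe_sub, PadicInt.coe_natCast]
    rwa [PadicInt.norm_def, this] at hnorm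
  have hpn : ((p : ℚ_[p]) ^ n) ≠ 0 := by
    apply pow_ne_zero
    exact_mod_cast hp.out.ne_zero
  have hpnQ : ((p : ℚ)) ^ n ≠ 0 := by
    apply pow_ne_zero; exact_mod_cast hp.out.ne_zero
  refine ⟨(a : ℚ) / (p : ℚ) ^ n, ⟨n, (a : ℤ), by rw [mul_comm, div_mul_cancel₀ _ hpnQ]; push_cast; ring⟩, ?_⟩
  have hcast : (((a : ℚ) / (p : ℚ) ^ n : ℚ) : ℚ_[p]) = (a : ℚ_[p]) / (p : ℚ_[p]) ^ n := by
    push_cast; ring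
  have hxq : x - (((a : ℚ) / (p : ℚ) ^ n : ℚ) : ℚ_[p])
      = (x * (p : ℚ_[p]) ^ n - (a : ℚ_[p])) / (p : ℚ_[p]) ^ n := by
    rw [hcast]; field_simp
  rw [hxq, norm_div, Padic.norm_p_pow]
  calc ‖x * (p : ℚ_[p]) ^ n - (a : ℚ_[p])‖ / (p : ℝ) ^ (-n : ℤ)
      ≤ (p : ℝ) ^ (-n : ℤ) / (p : ℝ) ^ (-n : ℤ) := by
        apply div_le_div_of_nonneg_right hnorm' (by positivity) |>.trans_eq rfl
    _ = 1 := div_self (by positivity)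

lemma int_of_isPAdicFrac {q : ℚ} (hq : IsPAdicFrac p q) (h : ‖(q : ℚ_[p])‖ ≤ 1) :
    ∃ b : ℤ, (b : ℚ) = q := by
  obtain ⟨n, a, ha⟩ := hq
  have h2 : ‖(a : ℚ_[p])‖ ≤ (p : ℝ) ^ (-n : ℤ) := by
    have hcast : (a : ℚ_[p]) = (p : ℚ_[p]) ^ n * (q : ℚ_[p]) := by
      rw [show (a : ℚ_[p]) = ((a : ℚ) : ℚ_[p]) by norm_cast, ← ha]; push_cast; ring
    rw [hcast, norm_mul, Padic.norm_p_pow]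
    calc (p : ℝ) ^ (-n : ℤ) * ‖(q : ℚ_[p])‖ ≤ (p : ℝ) ^ (-n : ℤ) * 1 := by
          apply mul_le_mul_of_nonneg_left h (by positivity)
      _ = _ := mul_one _
  obtain ⟨b, hb⟩ := (Padic.norm_int_le_pow_iff_dvd a n).1 h2
  refine ⟨b, ?_⟩
  have hpn : ((p : ℚ)) ^ n ≠ 0 := by
    apply pow_ne_zero; exact_mod_cast hp.out.ne_zero
  have : (p : ℚ) ^ n * q = (p : ℚ) ^ n * (b : ℚ) := by
    rw [ha, hb]; push_cast; ring
  exact (mul_left_cancel₀ hpn this).symm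

noncomputable def frac (x : ℚ_[p]) : ℚ := (exists_frac x).choose

lemma frac_isPAdicFrac (x : ℚ_[p]) : IsPAdicFrac p (frac x) := (exists_frac x).choose_spec.1

lemma norm_sub_frac (x : ℚ_[p]) : ‖x - (frac x : ℚ_[p])‖ ≤ 1 := (exists_frac x).choose_spec.2

lemma mem_zmultiples_one {q : ℚ} (b : ℤ) (hb : (b : ℚ) = q) :
    q ∈ AddSubgroup.zmultiples (1 : ℚ) :=
  ⟨b, by simp [hb]⟩

lemma exists_int_of_mem_zmultiples_one {q : ℚ} (h : q ∈ AddSubgroup.zmultiples (1 : ℚ)) :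
    ∃ b : ℤ, (b : ℚ) = q := by
  obtain ⟨b, hb⟩ := h
  exact ⟨b, by simpa using hb⟩

/-- The quotient `ℚ/ℤ`. -/
abbrev Q1 : Type := ℚ ⧸ AddSubgroup.zmultiples (1 : ℚ)

noncomputable def psi (p : ℕ) [Fact p.Prime] : ℚ_[p] →+ Q1 :=
  AddMonoidHom.mk' (fun x => QuotientAddGroup.mk (frac x)) (by
    intro x y
    show QuotientAddGroup.mk (frac (x + y))
        = QuotientAddGroup.mk (frac x) + QuotientAddGroup.mk (frac y)
    rw [← QuotientAddGroup.mk_add, QuotientAddGroup.eq]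
    set d : ℚ := -frac (x + y) + (frac x + frac y) with hd
    have hfrac : IsPAdicFrac p d :=
      isPAdicFrac_add (isPAdicFrac_neg (frac_isPAdicFrac _))
        (isPAdicFrac_add (frac_isPAdicFrac x) (frac_isPAdicFrac y))
    have hcast : ((d : ℚ) : ℚ_[p])
        = ((x + y) - (frac (x + y) : ℚ_[p])) + (-(x - (frac x : ℚ_[p])) + -(y - (frac y : ℚ_[p]))) := by
      push_cast [hd]; ring
    have hnorm : ‖((d : ℚ) : ℚ_[p])‖ ≤ 1 := by
      rw [hcast]
      refine le_trans (Padic.nonarchimedean _ _) (max_le (norm_sub_frac _) ?_)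
      refine le_trans (Padic.nonarchimedean _ _) (max_le ?_ ?_) <;>
        rw [norm_neg] <;> exact norm_sub_frac _
    obtain ⟨b, hb⟩ := int_of_isPAdicFrac hfrac hnorm
    exact mem_zmultiples_one b hb)

lemma psi_mem (x : ℚ_[p]) : psi p x ∈ primaryComponent p Q1 := by
  obtain ⟨n, a, ha⟩ := frac_isPAdicFrac x
  refine ⟨n, ?_⟩
  show p ^ n • (QuotientAddGroup.mk (frac x) : Q1) = 0
  rw [← QuotientAddGroup.mk_nsmul, QuotientAddGroup.eq_zero_iff]
  apply mem_zmultiples_one a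
  rw [← ha, nsmul_eq_mul]
  push_cast; ring

noncomputable def Psi (p : ℕ) [Fact p.Prime] : ℚ_[p] →+ primaryComponent p Q1 :=
  (psi p).codRestrict _ psi_mem

noncomputable def Phi (p : ℕ) [Fact p.Prime] : ℚ_[p] →+ (ℚ →+ primaryComponent p Q1) :=
  AddMonoidHom.mk'
    (fun x => AddMonoidHom.mk' (fun r => Psi p ((r : ℚ_[p]) * x)) (by
      intro r s
      show Psi p (((r + s : ℚ) : ℚ_[p]) * x) = Psi p ((r : ℚ_[p]) * x) + Psi p ((s : ℚ_[p]) * x)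
      rw [Rat.cast_add, add_mul, map_add]))
    (by
      intro x y
      ext r
      simp [mul_add, map_add])

lemma norm_le_one_of_psi_eq_zero {x : ℚ_[p]} (h : psi p x = 0) : ‖x‖ ≤ 1 := by
  have h' : (QuotientAddGroup.mk (frac x) : Q1) = 0 := h
  rw [QuotientAddGroup.eq_zero_iff] at h'
  obtain ⟨b, hb⟩ := exists_int_of_mem_zmultiples_one h'
  have : x = (x - (frac x : ℚ_[p])) + ((b : ℤ) : ℚ_[p]) := by
    rw [show ((b : ℤ) : ℚ_[p]) = ((frac x : ℚ) : ℚ_[p]) by rw [← hb]; push_cast; ring]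
    ring
  rw [this]
  exact le_trans (Padic.nonarchimedean _ _)
    (max_le (norm_sub_frac x) (Padic.norm_int_le_one b))

lemma Phi_injective : Function.Injective (Phi p) := by
  rw [injective_iff_map_eq_zero]
  intro x hx
  by_contra hx0
  have hxpos : 0 < ‖x‖ := norm_pos_iff.2 hx0
  have hp1 : (1 : ℝ) < (p : ℝ) := by exact_mod_cast hp.out.one_lt
  obtain ⟨n, hn⟩ := pow_unbounded_of_one_lt (‖x‖⁻¹) hp1
  have key : ‖(((((p : ℚ) ^ n)⁻¹ : ℚ)) : ℚ_[p]) * x‖ ≤ 1 := by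
    have h1 : Phi p x (((p : ℚ) ^ n)⁻¹) = 0 := by rw [hx]; rfl
    have h2 : psi p ((((((p : ℚ) ^ n)⁻¹ : ℚ)) : ℚ_[p]) * x) = 0 := by
      have := congrArg (Subtype.val) h1
      exact this
    exact norm_le_one_of_psi_eq_zero h2
  have hpn0 : ((p : ℚ_[p]) ^ n) ≠ 0 := by
    apply pow_ne_zero; exact_mod_cast hp.out.ne_zero
  have hcast : ((((((p : ℚ) ^ n)⁻¹ : ℚ)) : ℚ_[p])) = ((p : ℚ_[p]) ^ n)⁻¹ := by
    push_cast; ring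
  rw [hcast, norm_mul, norm_inv, Padic.norm_p_pow] at key
  have hlt : ‖x‖⁻¹ < (p : ℝ) ^ n := hn
  have hppow : ((p : ℝ) ^ (-n : ℤ))⁻¹ = (p : ℝ) ^ n := by
    rw [zpow_neg, inv_inv, zpow_natCast]
  rw [hppow] at key
  have h1' : (1 : ℝ) = ‖x‖⁻¹ * ‖x‖ := (inv_mul_cancel₀ (ne_of_gt hxpos)).symm
  have hlt2 : (1 : ℝ) < (p : ℝ) ^ n * ‖x‖ := by
    rw [h1']; exact mul_lt_mul_of_pos_right hn hxpos
  linarith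

end HomRatPrueferAux

namespace HomRatPrueferAux

/-- The `ℚ`-module structure on `ℚ →+ T` given by precomposition with multiplication. -/
noncomputable instance instModuleHomRat (T : Type*) [AddCommGroup T] : Module ℚ (ℚ →+ T) where
  smul q f := f.comp (AddMonoidHom.mulLeft q)
  one_smul f := by ext r; show f (1 * r) = f r; rw [one_mul]
  mul_smul q₁ q₂ f := by
    ext r
    show f (q₁ * q₂ * r) = f (q₂ * (q₁ * r))
    ring_nf
  smul_zero q := by ext r; rfl
  smul_add q f g := by ext r; rfl
  add_smul q₁ q₂ f := by
    ext r
    show f ((q₁ + q₂) * r) = f (q₁ * r) + f (q₂ * r)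
    rw [add_mul, map_add]
  zero_smul f := by
    ext r
    show f (0 * r) = 0
    rw [zero_mul, map_zero]

/-- Two `ℚ`-vector spaces of continuum cardinality are additively isomorphic. -/
theorem nonempty_addEquiv_of_mk_eq_continuum {V W : Type} [AddCommGroup V] [AddCommGroup W]
    [Module ℚ V] [Module ℚ W] (hV : #V = 𝔠) (hW : #W = 𝔠) : Nonempty (V ≃+ W) := by
  have key : ∀ (X : Type) [AddCommGroup X] [Module ℚ X], #X = 𝔠 →
      #(Module.Basis.ofVectorSpaceIndex ℚ X) = 𝔠 := by
    intro X _ _ hX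
    have b := Module.Basis.ofVectorSpace ℚ X
    have hcongr : #X = #(Module.Basis.ofVectorSpaceIndex ℚ X →₀ ℚ) := Cardinal.mk_congr b.repr.toEquiv
    rcases finite_or_infinite (Module.Basis.ofVectorSpaceIndex ℚ X) with h | h
    · exfalso
      have h1 : #(Module.Basis.ofVectorSpaceIndex ℚ X →₀ ℚ) ≤ ℵ₀ := by
        have : Countable (Module.Basis.ofVectorSpaceIndex ℚ X →₀ ℚ) := by
          have : Countable (Module.Basis.ofVectorSpaceIndex ℚ X → ℚ) := inferInstance
          exact Function.Injective.countable (DFunLike.coe_injective)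
        exact Cardinal.mk_le_aleph0
      rw [hX] at hcongr
      exact absurd (hcongr.le.trans h1) (not_le.2 (aleph0_lt_continuum))
    · rw [Cardinal.mk_finsupp_lift_of_infinite, Cardinal.lift_id, Cardinal.lift_id,
        Cardinal.mk_eq_aleph0 ℚ] at hcongr
      rw [hX] at hcongr
      rcases max_cases #(Module.Basis.ofVectorSpaceIndex ℚ X) ℵ₀ with ⟨h1, _⟩ | ⟨h1, h2⟩
      · rw [h1] at hcongr; exact hcongr.symm
      · exfalso; rw [h1] at hcongr
        exact absurd hcongr.le (not_le.2 (aleph0_lt_continuum))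
  have e : Module.Basis.ofVectorSpaceIndex ℚ V ≃ Module.Basis.ofVectorSpaceIndex ℚ W :=
    Classical.choice (Cardinal.eq.1 ((key V hV).trans (key W hW).symm))
  exact ⟨(((Module.Basis.ofVectorSpace ℚ V).repr.trans
    (Finsupp.domLCongr e : _ ≃ₗ[ℚ] _)).trans (Module.Basis.ofVectorSpace ℚ W).repr.symm).toAddEquiv⟩

variable (p : ℕ) [hp : Fact p.Prime]

lemma mk_padic_eq : #(ℚ_[p]) = 𝔠 := by
  refine le_antisymm ?_ (continuum_le_cardinal_of_nontriviallyNormedField ℚ_[p])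
  have h1 : #ℚ_[p] ≤ #(CauSeq ℚ (padicNorm p)) :=
    Cardinal.mk_le_of_surjective (f := (Quotient.mk' : CauSeq ℚ (padicNorm p) → ℚ_[p]))
      (Quotient.mk'_surjective)
  have h2 : #(CauSeq ℚ (padicNorm p)) ≤ #(ℕ → ℚ) :=
    Cardinal.mk_le_of_injective (f := fun f => (f : ℕ → ℚ)) (fun a b h => Subtype.ext h)
  refine (h1.trans h2).trans ?_
  simp [Cardinal.mk_arrow, Cardinal.aleph0_power_aleph0]

lemma mk_hom_eq : #(ℚ →+ primaryComponent p Q1) = 𝔠 := by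
  apply le_antisymm
  · have h1 : #(ℚ →+ primaryComponent p Q1) ≤ #(ℚ → primaryComponent p Q1) :=
      Cardinal.mk_le_of_injective (DFunLike.coe_injective)
    have hc : Countable (primaryComponent p Q1) := by
      have : Countable Q1 := Quotient.countable
      exact Subtype.countable
    have h2 : #(ℚ → primaryComponent p Q1) ≤ ℵ₀ ^ ℵ₀ := by
      rw [Cardinal.mk_arrow, Cardinal.lift_id, Cardinal.lift_id, Cardinal.mk_eq_aleph0 ℚ]
      exact Cardinal.power_le_power_right Cardinal.mk_le_aleph0
    rw [Cardinal.aleph0_power_aleph0] at h2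
    exact h1.trans h2
  · rw [← mk_padic_eq p]
    exact Cardinal.mk_le_of_injective (Phi_injective (p := p))

end HomRatPrueferAux

/-- `Hom(ℚ, ℤ(p^∞)) ≅ ℚ_p`: the additive homomorphisms from `ℚ` to the Prüfer
`p`-group (the `p`-primary component of `ℚ/ℤ`) form a group isomorphic to the additive
group of the `p`-adic numbers. -/
theorem homRat_pruefer_addEquiv_padic (p : ℕ) [Fact p.Prime] :
    Nonempty
      ((ℚ →+
          primaryComponent p (ℚ ⧸ AddSubgroup.zmultiples (1 : ℚ))) ≃+ ℚ_[p]) := by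
  exact HomRatPrueferAux.nonempty_addEquiv_of_mk_eq_continuum (HomRatPrueferAux.mk_hom_eq p) (HomRatPrueferAux.mk_padic_eq p)
end
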